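/- Let G be a 5-minimal subcubic graph (G² is not DP-5-colorable but the square of every proper subgraph of G is). Then G contains no 3-thread, i.e., no path on three vertices all of which have degree 2 in G. -/

import Mathlib

open scoped Classical

universe u v

/-- `(H, L)` is a DP-cover of `G`: fibers are cliques, cross edges exist only between
fibers of adjacent vertices and form matchings, and all edges stay within the lists. -/
def IsDPCover {V : Type u} (G : SimpleGraph V) (L : V → Finset ℕ)
    (H : SimpleGraph (V × ℕ)) : Prop :=
  (∀ v : V, ∀ c ∈ L v, ∀ c' ∈ L v, c ≠ c' → H.Adj (v, c) (v, c')) ∧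
  (∀ u v : V, ∀ c c' : ℕ, H.Adj (u, c) (v, c') →
      c ∈ L u ∧ c' ∈ L v ∧ (u = v ∨ G.Adj u v)) ∧
  (∀ u v : V, u ≠ v → ∀ c c₁ c₂ : ℕ,
      H.Adj (u, c) (v, c₁) → H.Adj (u, c) (v, c₂) → c₁ = c₂)

/-- `G` is DP-`k`-colorable: every cover with lists of size at least `k` admits an
independent transversal (one vertex from each fiber, pairwise nonadjacent in `H`). -/
def DPColorable {V : Type u} (G : SimpleGraph V) (k : ℕ) : Prop :=
  ∀ (L : V → Finset ℕ) (H : SimpleGraph (V × ℕ)),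
    IsDPCover G L H → (∀ v, k ≤ (L v).card) →
    ∃ f : V → ℕ, (∀ v, f v ∈ L v) ∧
      ∀ u v : V, u ≠ v → ¬ H.Adj (u, f u) (v, f v)

noncomputable def dpChromaticNumber {V : Type u} (G : SimpleGraph V) : ℕ :=
  sInf {k | DPColorable G k}

/-- The square of a graph: join vertices at distance at most 2. -/
def graphSq {V : Type u} (G : SimpleGraph V) : SimpleGraph V where
  Adj u v := u ≠ v ∧ (G.Adj u v ∨ ∃ w, G.Adj u w ∧ G.Adj w v)
  symm := ⟨by
    rintro u v ⟨h1, h2⟩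
    refine ⟨h1.symm, ?_⟩
    rcases h2 with h | ⟨w, hw1, hw2⟩
    · exact Or.inl h.symm
    · exact Or.inr ⟨w, hw2.symm, hw1.symm⟩⟩
  loopless := ⟨fun v h => h.1 rfl⟩

/-- `G` is `k`-minimal: `G²` is not DP-`k`-colorable but the square of every proper
subgraph of `G` is DP-`k`-colorable. -/
def KMinimal {V : Type u} (G : SimpleGraph V) (k : ℕ) : Prop :=
  ¬ DPColorable (graphSq G) k ∧ ∀ H : SimpleGraph V, H < G → DPColorable (graphSq H) k

/-- `mad(G) < q`: every nonempty (induced) subgraph has average degree less than `q`.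
The filtered product counts each edge twice, i.e. it equals `2|E(H)|`. -/
def MadLT {V : Type u} [Fintype V] (G : SimpleGraph V) (q : ℚ) : Prop :=
  ∀ s : Finset V, s.Nonempty →
    ((((s ×ˢ s).filter fun p : V × V => G.Adj p.1 p.2).card : ℚ)) < q * s.card

/-- `H` is a minor of `G`. -/
def HasMinor {V : Type u} {W : Type v} (G : SimpleGraph V) (H : SimpleGraph W) : Prop :=
  ∃ f : W → Set V, (∀ w, (f w).Nonempty) ∧
    (∀ w, (G.induce (f w)).Connected) ∧
    (∀ w w', w ≠ w' → Disjoint (f w) (f w')) ∧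
    (∀ w w', H.Adj w w' → ∃ x ∈ f w, ∃ y ∈ f w', G.Adj x y)

/-- Planarity via Wagner's theorem: no `K₅` minor and no `K₃,₃` minor. -/
def PlanarGraph {V : Type u} (G : SimpleGraph V) : Prop :=
  ¬ HasMinor G (⊤ : SimpleGraph (Fin 5)) ∧
  ¬ HasMinor G (completeBipartiteGraph (Fin 3) (Fin 3))

lemma graphSq_adj {V : Type u} (G : SimpleGraph V) (a b : V) :
    (graphSq G).Adj a b ↔ a ≠ b ∧ (G.Adj a b ∨ ∃ w, G.Adj a w ∧ G.Adj w b) := Iff.rfl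

/-- `G` minus the two edges `v1v2` and `v2v3`. -/
def modGraph {V : Type u} (G : SimpleGraph V) (v1 v2 v3 : V) : SimpleGraph V where
  Adj a b := G.Adj a b ∧
    ¬((a = v1 ∧ b = v2) ∨ (a = v2 ∧ b = v1) ∨ (a = v2 ∧ b = v3) ∨ (a = v3 ∧ b = v2))
  symm := ⟨by
    rintro a b ⟨h, hn⟩
    exact ⟨h.symm, by tauto⟩⟩
  loopless := ⟨fun a h => G.loopless.irrefl a h.1⟩

lemma modGraph_adj {V : Type u} (G : SimpleGraph V) (v1 v2 v3 a b : V) :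
    (modGraph G v1 v2 v3).Adj a b ↔ G.Adj a b ∧
      ¬((a = v1 ∧ b = v2) ∨ (a = v2 ∧ b = v1) ∨ (a = v2 ∧ b = v3) ∨ (a = v3 ∧ b = v2)) :=
  Iff.rfl

/-- Prune the cover `H` to only keep cross-edges over `G'`-square edges. -/
def modCover {V : Type u} (H : SimpleGraph (V × ℕ)) (G' : SimpleGraph V) :
    SimpleGraph (V × ℕ) where
  Adj p q := H.Adj p q ∧ (p.1 = q.1 ∨ (graphSq G').Adj p.1 q.1)
  symm := ⟨by
    rintro p q ⟨h, h2⟩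
    refine ⟨h.symm, ?_⟩
    rcases h2 with h2 | h2
    · exact Or.inl h2.symm
    · exact Or.inr h2.symm⟩
  loopless := ⟨fun p h => H.loopless.irrefl p h.1⟩

lemma modCover_adj {V : Type u} (H : SimpleGraph (V × ℕ)) (G' : SimpleGraph V)
    (p q : V × ℕ) :
    (modCover H G').Adj p q ↔ H.Adj p q ∧ (p.1 = q.1 ∨ (graphSq G').Adj p.1 q.1) := Iff.rfl

lemma exists_good_color {V : Type u} (H : SimpleGraph (V × ℕ))
    (hmatch : ∀ u v : V, u ≠ v → ∀ c c₁ c₂ : ℕ,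
      H.Adj (u, c) (v, c₁) → H.Adj (u, c) (v, c₂) → c₁ = c₂)
    (v : V) (L : Finset ℕ) (hL : 5 ≤ L.card) (g : V → ℕ) (P : V → Prop)
    (W : Finset V) (hW : W.card ≤ 4) (hPv : ∀ w, P w → w ≠ v)
    (hwit : ∀ c w, P w → H.Adj (v, c) (w, g w) → w ∈ W) :
    ∃ c ∈ L, ∀ w, P w → ¬ H.Adj (v, c) (w, g w) := by
  classical
  set B := L.filter (fun c => ∃ w, P w ∧ H.Adj (v, c) (w, g w)) with hBdef
  have hmem : ∀ c ∈ B, ∃ w, P w ∧ H.Adj (v, c) (w, g w) := by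
    intro c hc
    exact (Finset.mem_filter.mp hc).2
  have hcard : B.card ≤ W.card := by
    apply Finset.card_le_card_of_injOn
      (fun c => if h : ∃ w, P w ∧ H.Adj (v, c) (w, g w) then Classical.choose h else v)
    · intro c hc
      have h := hmem c hc
      simp only [dif_pos h]
      exact hwit _ _ (Classical.choose_spec h).1 (Classical.choose_spec h).2
    · intro c hc c' hc' heq
      have h := hmem c hc
      have h' := hmem c' hc'
      simp only [dif_pos h, dif_pos h'] at heq
      have hs := Classical.choose_spec h
      have hs' := Classical.choose_spec h'
      rw [heq] at hs
      exact hmatch _ v (hPv _ hs'.1) (g (Classical.choose h')) c c' hs.2.symm hs'.2.symm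
  have hex : ∃ c ∈ L, c ∉ B := by
    by_contra hcon
    push_neg at hcon
    have hsub : L ⊆ B := hcon
    have := Finset.card_le_card hsub
    omega
  obtain ⟨c, hcL, hcB⟩ := hex
  refine ⟨c, hcL, ?_⟩
  intro w hPw hadj
  exact hcB (Finset.mem_filter.mpr ⟨hcL, ⟨w, hPw, hadj⟩⟩)

/-- The other neighbour of a degree-2 vertex. -/
lemma other_neighbor {V : Type u} [Fintype V] (G : SimpleGraph V) {v a : V}
    (hd : G.degree v = 2) (ha : G.Adj v a) :
    ∃ b, b ≠ a ∧ G.Adj v b ∧ ∀ w, G.Adj v w → w = a ∨ w = b := by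
  classical
  have hmem : a ∈ G.neighborFinset v := (SimpleGraph.mem_neighborFinset G v a).mpr ha
  have hcard : ((G.neighborFinset v).erase a).card = 1 := by
    rw [Finset.card_erase_of_mem hmem]
    have : (G.neighborFinset v).card = 2 := hd
    omega
  obtain ⟨b, hb⟩ := Finset.card_eq_one.mp hcard
  have hbmem : b ∈ (G.neighborFinset v).erase a := hb ▸ Finset.mem_singleton_self b
  refine ⟨b, Finset.ne_of_mem_erase hbmem,
    (SimpleGraph.mem_neighborFinset G v b).mp (Finset.mem_of_mem_erase hbmem), ?_⟩
  intro w hw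
  by_cases hwa : w = a
  · exact Or.inl hwa
  · right
    have : w ∈ (G.neighborFinset v).erase a :=
      Finset.mem_erase.mpr ⟨hwa, (SimpleGraph.mem_neighborFinset G v w).mpr hw⟩
    rw [hb] at this
    exact Finset.mem_singleton.mp this

/-- a 5-minimal subcubic graph contains no 3-thread. -/
theorem no_three_thread_of_5minimal {V : Type u} [Fintype V] (G : SimpleGraph V)
    (hsub : ∀ v, G.degree v ≤ 3) (hmin : KMinimal G 5) :
    ¬ ∃ v₁ v₂ v₃ : V, v₁ ≠ v₃ ∧ G.Adj v₁ v₂ ∧ G.Adj v₂ v₃ ∧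
      G.degree v₁ = 2 ∧ G.degree v₂ = 2 ∧ G.degree v₃ = 2 := by
  classical
  obtain ⟨hnc, hdel⟩ := hmin
  rintro ⟨v1, v2, v3, h13, a12, a23, d1, d2, d3⟩
  -- neighbour structure
  obtain ⟨u1, hu1v2, au1, hN1⟩ := other_neighbor G d1 a12
  obtain ⟨u3, hu3v2, au3, hN3⟩ := other_neighbor G d3 a23.symm
  -- the two neighbours of v2 are exactly v1 and v3
  have hN2 : ∀ w, G.Adj v2 w → w = v1 ∨ w = v3 := by
    obtain ⟨b, hbne, hb, hN⟩ := other_neighbor G d2 a12.symm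
    intro w hw
    rcases hN w hw with h | h
    · exact Or.inl h
    · subst h
      rcases hN v3 a23 with h | h
      · exact absurd h h13.symm
      · exact Or.inr h.symm
  set G' := modGraph G v1 v2 v3 with hG'def
  have hlt : G' < G := by
    have hle : G' ≤ G := fun a b h => h.1
    refine lt_of_le_of_ne hle ?_
    intro heq
    have hne : ¬ G'.Adj v1 v2 := fun h => h.2 (Or.inl ⟨rfl, rfl⟩)
    rw [heq] at hne
    exact hne a12
  have hDP := hdel G' hlt
  apply hnc
  intro L H hcov hL
  obtain ⟨h1c, h2c, h3c⟩ := hcov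
  set H' := modCover H G' with hH'def
  have hcov' : IsDPCover (graphSq G') L H' := by
    refine ⟨?_, ?_, ?_⟩
    · intro v c hc c' hc' hne
      exact ⟨h1c v c hc c' hc' hne, Or.inl rfl⟩
    · intro a b c c' h
      obtain ⟨h1, h2, _⟩ := h2c a b c c' h.1
      exact ⟨h1, h2, h.2⟩
    · intro a b hne c c1 c2 ha hb
      exact h3c a b hne c c1 c2 ha.1 hb.1
  obtain ⟨f, hfL, hf⟩ := hDP L H' hcov' hL
  -- Claim A: square-adjacencies away from v1, v2 survive in G'
  have claimA : ∀ a b : V, a ≠ b → a ≠ v1 → a ≠ v2 → b ≠ v1 → b ≠ v2 →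
      (graphSq G).Adj a b → (graphSq G').Adj a b := by
    intro a b hab ha1 ha2 hb1 hb2 hadj
    obtain ⟨-, hcase⟩ := hadj
    refine ⟨hab, ?_⟩
    rcases hcase with h | ⟨x, hx1, hx2⟩
    · exact Or.inl ⟨h, by tauto⟩
    · by_cases hx : x = v2
      · subst hx
        rcases hN2 a hx1.symm with h | h
        · exact absurd h ha1
        · rcases hN2 b hx2 with h' | h'
          · exact absurd h' hb1
          · exact absurd (h.trans h'.symm) hab
      · exact Or.inr ⟨x, ⟨hx1, by tauto⟩, ⟨hx2, by tauto⟩⟩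
  -- pick a new colour for v1
  have hv1u1 : v1 ≠ u1 := fun h => G.loopless.irrefl v1 (h ▸ au1)
  set T1 : Finset V := insert u1 (insert v3 (G.neighborFinset u1)) with hT1
  have hv1T1 : v1 ∈ T1 := by
    simp only [hT1, Finset.mem_insert]
    right; right
    exact (SimpleGraph.mem_neighborFinset G u1 v1).mpr au1.symm
  set W1 : Finset V := T1.erase v1 with hW1
  have hW1card : W1.card ≤ 4 := by
    have h1 : T1.card ≤ 5 := by
      have := Finset.card_insert_le u1 (insert v3 (G.neighborFinset u1))
      have := Finset.card_insert_le v3 (G.neighborFinset u1)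
      have hdeg : (G.neighborFinset u1).card ≤ 3 := hsub u1
      simp only [hT1]
      omega
    rw [hW1, Finset.card_erase_of_mem hv1T1]
    omega
  have hwit1 : ∀ c w, (w ≠ v1 ∧ w ≠ v2) → H.Adj (v1, c) (w, f w) → w ∈ W1 := by
    intro c w hw hadj
    obtain ⟨-, -, hsq⟩ := h2c v1 w c (f w) hadj
    rcases hsq with h | h
    · exact absurd h.symm hw.1
    · obtain ⟨-, hcase⟩ := h
      refine Finset.mem_erase.mpr ⟨hw.1, ?_⟩
      rcases hcase with h | ⟨x, hx1, hx2⟩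
      · rcases hN1 w h with h' | h'
        · exact absurd h' hw.2
        · subst h'
          exact Finset.mem_insert_self _ _
      · rcases hN1 x hx1 with h' | h'
        · subst h'
          rcases hN2 w hx2 with h'' | h''
          · exact absurd h'' hw.1
          · subst h''
            exact Finset.mem_insert_of_mem (Finset.mem_insert_self _ _)
        · rw [h'] at hx2
          exact Finset.mem_insert_of_mem (Finset.mem_insert_of_mem
            ((SimpleGraph.mem_neighborFinset G u1 w).mpr hx2))
  obtain ⟨c1, hc1L, hc1⟩ := exists_good_color H h3c v1 (L v1) (hL v1) f
    (fun w => w ≠ v1 ∧ w ≠ v2) W1 hW1card (fun w hw => hw.1) hwit1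
  -- pick a new colour for v2
  set g : V → ℕ := Function.update f v1 c1 with hg
  set W2 : Finset V := insert v1 (insert v3 (insert u1 {u3})) with hW2
  have hW2card : W2.card ≤ 4 := by
    have h1 := Finset.card_insert_le v1 (insert v3 (insert u1 ({u3} : Finset V)))
    have h2 := Finset.card_insert_le v3 (insert u1 ({u3} : Finset V))
    have h3 := Finset.card_insert_le u1 ({u3} : Finset V)
    have h4 : ({u3} : Finset V).card = 1 := Finset.card_singleton u3
    simp only [hW2]
    omega
  have hwit2 : ∀ c w, w ≠ v2 → H.Adj (v2, c) (w, g w) → w ∈ W2 := by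
    intro c w hw hadj
    obtain ⟨-, -, hsq⟩ := h2c v2 w c (g w) hadj
    rcases hsq with h | h
    · exact absurd h.symm hw
    · obtain ⟨-, hcase⟩ := h
      simp only [hW2, Finset.mem_insert, Finset.mem_singleton]
      rcases hcase with h | ⟨x, hx1, hx2⟩
      · rcases hN2 w h with h' | h'
        · exact Or.inl h'
        · exact Or.inr (Or.inl h')
      · rcases hN2 x hx1 with h' | h'
        · subst h'
          rcases hN1 w hx2 with h'' | h''
          · exact absurd h'' hw
          · exact Or.inr (Or.inr (Or.inl h''))
        · subst h'
          rcases hN3 w hx2 with h'' | h''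
          · exact absurd h'' hw
          · exact Or.inr (Or.inr (Or.inr h''))
  have hv2ne : ∀ w, w ≠ v2 → w ≠ v2 := fun w hw => hw
  obtain ⟨c2, hc2L, hc2⟩ := exists_good_color H h3c v2 (L v2) (hL v2) g
    (fun w => w ≠ v2) W2 hW2card hv2ne hwit2
  -- the new colouring
  set f' : V → ℕ := Function.update g v2 c2 with hf'
  have hf'v2 : f' v2 = c2 := Function.update_self v2 c2 g
  have hf'ne2 : ∀ w, w ≠ v2 → f' w = g w := fun w hw => Function.update_of_ne hw c2 g
  have hgv1 : g v1 = c1 := Function.update_self v1 c1 f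
  have hgne1 : ∀ w, w ≠ v1 → g w = f w := fun w hw => Function.update_of_ne hw c1 f
  have hv12 : v1 ≠ v2 := a12.ne
  refine ⟨f', ?_, ?_⟩
  · intro v
    by_cases hv2 : v = v2
    · subst hv2
      rw [hf'v2]; exact hc2L
    · rw [hf'ne2 v hv2]
      by_cases hv1 : v = v1
      · subst hv1
        rw [hgv1]; exact hc1L
      · rw [hgne1 v hv1]; exact hfL v
  · intro a b hab hadj
    by_cases ha2 : a = v2
    · have hb2 : b ≠ v2 := fun h => hab (ha2.trans h.symm)
      rw [ha2, hf'v2, hf'ne2 b hb2] at hadj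
      exact hc2 b hb2 hadj
    · by_cases hb2 : b = v2
      · rw [hb2, hf'v2, hf'ne2 a ha2] at hadj
        exact hc2 a ha2 hadj.symm
      · rw [hf'ne2 a ha2, hf'ne2 b hb2] at hadj
        by_cases ha1 : a = v1
        · have hb1 : b ≠ v1 := fun h => hab (ha1.trans h.symm)
          rw [ha1, hgv1, hgne1 b hb1] at hadj
          exact hc1 b ⟨hb1, hb2⟩ hadj
        · by_cases hb1 : b = v1
          · rw [hb1, hgv1, hgne1 a ha1] at hadj
            exact hc1 a ⟨ha1, ha2⟩ hadj.symm
          · rw [hgne1 a ha1, hgne1 b hb1] at hadj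
            obtain ⟨-, -, hsq⟩ := h2c a b (f a) (f b) hadj
            rcases hsq with h | h
            · exact hab h
            · exact hf a b hab ⟨hadj, Or.inr (claimA a b hab ha1 ha2 hb1 hb2 h)⟩
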